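/- arXiv:2308.02735 — 2 statements merged into one kernel-verified Lean document; each statement's English description precedes it below -/
import Mathlib

section
/- Let v1 = [[1,0],[0,-1]], v2 = [[0,1],[1,0]], v3 = [[0,1],[-1,0]] and v4 = [[1/2, √3/2],[-i√3/2, i/2]] in M₂(ℂ). For each i ∈ {1,2,3}, if x ∈ M₂(ℂ) is a complex linear combination of the identity matrix and v_i, and x commutes with v4 (i.e. x v4 = v4 x), then x is a scalar multiple of the identity matrix. -/
open Complex

noncomputable def v₄ : Matrix (Fin 2) (Fin 2) ℂ :=
  !![1 / 2, ((Real.sqrt 3 : ℝ) : ℂ) / 2;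
     -I * ((Real.sqrt 3 : ℝ) : ℂ) / 2, I / 2]

theorem stmt2 (k : Fin 3) (x : Matrix (Fin 2) (Fin 2) ℂ)
    (hx : ∃ a b : ℂ,
      x = a • (1 : Matrix (Fin 2) (Fin 2) ℂ) +
          b • (![!![1, 0; 0, -1], !![0, 1; 1, 0], !![0, 1; -1, 0]] k))
    (hcomm : x * v₄ = v₄ * x) :
    ∃ c : ℂ, x = c • (1 : Matrix (Fin 2) (Fin 2) ℂ) := by
  obtain ⟨a, b, rfl⟩ := hx
  refine ⟨a, ?_⟩
  have hs : ((Real.sqrt 3 : ℝ) : ℂ) ≠ 0 := by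
    simpa using Real.sqrt_ne_zero'.mpr (by norm_num : (0:ℝ) < 3)
  suffices hb : b = 0 by simp [hb]
  fin_cases k
  · have h := congrFun (congrFun hcomm 0) 1
    simp [v₄, Matrix.mul_apply, Fin.sum_univ_two, Matrix.one_apply] at h
    have : b * ((Real.sqrt 3 : ℝ) : ℂ) = 0 := by linear_combination h
    exact (mul_eq_zero.1 this).resolve_right hs
  · have h := congrFun (congrFun hcomm 0) 0
    simp [v₄, Matrix.mul_apply, Fin.sum_univ_two, Matrix.one_apply] at h
    have : b * ((Real.sqrt 3 : ℝ) : ℂ) * (I + 1) = 0 := by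
      linear_combination -2 * h
    rcases mul_eq_zero.1 this with h1 | h1
    · exact (mul_eq_zero.1 h1).resolve_right hs
    · exfalso
      have : I = -1 := by linear_combination h1
      simpa [Complex.ext_iff] using this
  · have h := congrFun (congrFun hcomm 0) 0
    simp [v₄, Matrix.mul_apply, Fin.sum_univ_two, Matrix.one_apply] at h
    have : b * ((Real.sqrt 3 : ℝ) : ℂ) * (I - 1) = 0 := by
      linear_combination -2 * h
    rcases mul_eq_zero.1 this with h1 | h1
    · exact (mul_eq_zero.1 h1).resolve_right hs
    · exfalso
      have : I = 1 := by linear_combination h1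
      simpa [Complex.ext_iff] using this
end

section
/- Let F be the free group on four generators g₁, g₂, g₃, g₄, and let f : G → ℂ be square-summable (∑_{s∈F} |f(s)|² < ∞). Assume that for all s ∈ F and all n ∈ ℤ one has |f(g₁ⁿ s g₁⁻ⁿ)| = |f(s)| and |f(g₂²ⁿ s g₂⁻²ⁿ)| = |f(s)|. Then f(s) = 0 for every s ≠ 1. -/
open FreeGroup List

variable {α : Type*} [DecidableEq α]

private lemma chain'_of_reduce : ∀ {L : List (α × Bool)},
    FreeGroup.reduce L = L → List.Chain' (fun a b : α × Bool => ¬(a.1 = b.1 ∧ a.2 = !b.2)) L := by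
  intro L
  induction L with
  | nil => intro _; exact List.isChain_nil
  | cons x t ih =>
    intro h
    rw [FreeGroup.reduce.cons] at h
    rcases r : FreeGroup.reduce t with _ | ⟨y, ts⟩
    · rw [r] at h
      simp only at h
      have : t = [] := by
        have := congrArg List.length h; simpa using this.symm
      subst this
      exact List.isChain_singleton _
    · rw [r] at h
      simp only at h
      split_ifs at h with hc
      · exfalso
        have hlen : (FreeGroup.reduce t).length ≤ t.length :=
          FreeGroup.Red.length_le FreeGroup.reduce.red
        rw [r] at hlen
        have : ts = x :: t := h
        rw [this] at hlen
        simp at hlen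
      · have ht : t = y :: ts := by
          injection h with _ h2
          exact h2.symm
        have htr : FreeGroup.reduce t = t := by rw [r, ht]
        rw [ht]
        exact List.isChain_cons_cons.mpr ⟨hc, ht ▸ ih htr⟩

private lemma reduce_of_chain' : ∀ {L : List (α × Bool)},
    List.Chain' (fun a b : α × Bool => ¬(a.1 = b.1 ∧ a.2 = !b.2)) L → FreeGroup.reduce L = L := by
  intro L
  induction L with
  | nil => intro _; rfl
  | cons x t ih =>
    intro h
    rw [FreeGroup.reduce.cons, ih h.tail]
    cases t with
    | nil => rfl
    | cons y ts =>
      simp only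
      rw [if_neg (List.isChain_cons_cons.mp h).1]

private lemma chain'_toWord (s : FreeGroup α) :
    List.Chain' (fun a b : α × Bool => ¬(a.1 = b.1 ∧ a.2 = !b.2)) s.toWord :=
  chain'_of_reduce s.reduce_toWord

private lemma conj_word (i j : α) (b : Bool) (L' : List (α × Bool)) (s : FreeGroup α)
    (n : ℕ) (hn : 0 < n) (hij : j ≠ i) (hw : s.toWord = L' ++ [(j, b)]) :
    (s * FreeGroup.of i ^ n * s⁻¹).toWord
      = s.toWord ++ List.replicate n (i, true) ++ FreeGroup.invRev s.toWord := by
  have hs : s = FreeGroup.mk s.toWord := FreeGroup.mk_toWord.symm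
  have hpow : (FreeGroup.of i ^ n : FreeGroup α) = FreeGroup.mk (List.replicate n (i, true)) := by
    rw [← FreeGroup.toWord_of_pow (α := α) i n, FreeGroup.mk_toWord]
  have hinv : s⁻¹ = FreeGroup.mk (FreeGroup.invRev s.toWord) := by
    conv_lhs => rw [hs]
    rw [FreeGroup.inv_mk]
  have hmul : s * FreeGroup.of i ^ n * s⁻¹
      = FreeGroup.mk (s.toWord ++ List.replicate n (i, true) ++ FreeGroup.invRev s.toWord) := by
    conv_rhs => rw [← FreeGroup.mul_mk, ← FreeGroup.mul_mk, ← hinv, ← hpow, ← hs]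
  rw [hmul, FreeGroup.toWord_mk]
  apply reduce_of_chain'
  have c1 := chain'_toWord s
  have c2 : List.Chain' (fun a b : α × Bool => ¬(a.1 = b.1 ∧ a.2 = !b.2))
      (List.replicate n ((i, true) : α × Bool)) :=
    chain'_of_reduce (FreeGroup.reduce_replicate n _)
  have c3 : List.Chain' (fun a b : α × Bool => ¬(a.1 = b.1 ∧ a.2 = !b.2))
      (FreeGroup.invRev s.toWord) := by
    apply chain'_of_reduce
    rw [FreeGroup.reduce_invRev, s.reduce_toWord]
  have hlast : (s.toWord).getLast? = some (j, b) := by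
    rw [hw]; exact List.getLast?_concat
  have hhead : (List.replicate n ((i, true) : α × Bool)).head? = some (i, true) := by
    obtain ⟨n', rfl⟩ := Nat.exists_eq_succ_of_ne_zero hn.ne'
    simp [List.replicate_succ]
  have hlast2 : (List.replicate n ((i, true) : α × Bool)).getLast? = some (i, true) := by
    obtain ⟨n', rfl⟩ := Nat.exists_eq_succ_of_ne_zero hn.ne'
    simp [List.getLast?_replicate]
  have hheadinv : (FreeGroup.invRev s.toWord).head? = some (j, !b) := by
    rw [hw]
    simp [FreeGroup.invRev]
  rw [List.append_assoc]
  refine List.isChain_append.mpr ⟨c1, List.isChain_append.mpr ⟨c2, c3, ?_⟩, ?_⟩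
  · intro p hp q hq
    rw [hlast2] at hp; rw [hheadinv] at hq
    simp at hp hq
    subst hp; subst hq
    simp [hij.symm]
  · intro p hp q hq
    rw [hlast] at hp
    rw [List.head?_append, hhead] at hq
    simp at hp hq
    subst hp; subst hq
    simp [hij]

private lemma comm_pow_aux (i : α) (n : ℕ) (hn : 0 < n) :
    ∀ (m : ℕ) (s : FreeGroup α), s.toWord.length ≤ m →
      Commute (FreeGroup.of i ^ n) s → ∃ k : ℤ, s = FreeGroup.of i ^ k := by
  intro m
  induction m with
  | zero =>
    intro s hl _
    have : s.toWord = [] := List.length_eq_zero_iff.mp (Nat.le_zero.mp hl)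
    exact ⟨0, by rw [FreeGroup.toWord_eq_nil_iff.mp this, zpow_zero]⟩
  | succ m ih =>
    intro s hl hc
    rcases List.eq_nil_or_concat' s.toWord with hnil | ⟨L', ⟨j, b⟩, hw⟩
    · exact ⟨0, by rw [FreeGroup.toWord_eq_nil_iff.mp hnil, zpow_zero]⟩
    by_cases hij : j = i
    · subst hij
      -- peel the last letter
      set u : FreeGroup α := FreeGroup.mk L' with hu
      have hLred : FreeGroup.reduce L' = L' := by
        apply reduce_of_chain'
        exact (chain'_toWord s).prefix ⟨[(j, b)], hw.symm⟩
      have hLw : u.toWord = L' := by rw [hu, FreeGroup.toWord_mk, hLred]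
      have hmk1 : FreeGroup.mk [((j : α), b)] = FreeGroup.of j ^ (if b then (1 : ℤ) else -1) := by
        cases b
        · simp only [if_neg Bool.false_ne_true]
          rw [zpow_neg, zpow_one]
          rw [show (FreeGroup.of j : FreeGroup α) = FreeGroup.mk [(j, true)] from rfl,
            FreeGroup.inv_mk]
          simp [FreeGroup.invRev]
        · simp only [if_pos rfl, zpow_one]
          rfl
      have hsu : s = u * FreeGroup.of j ^ (if b then (1 : ℤ) else -1) := by
        conv_lhs => rw [← FreeGroup.mk_toWord (x := s)]
        rw [hw, ← FreeGroup.mul_mk, hmk1, hu]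
      have hcpow : Commute (FreeGroup.of j ^ n)
          ((FreeGroup.of j : FreeGroup α) ^ (if b then (1 : ℤ) else -1)) :=
        ((Commute.refl (FreeGroup.of j)).pow_left n).zpow_right _
      have hcu : Commute (FreeGroup.of j ^ n) u := by
        have : u = s * (FreeGroup.of j ^ (if b then (1 : ℤ) else -1))⁻¹ := by
          rw [hsu]; group
        rw [this]
        exact hc.mul_right hcpow.inv_right
      have hlen : u.toWord.length ≤ m := by
        rw [hLw]
        have := congrArg List.length hw
        simp at this
        omega
      obtain ⟨k, hk⟩ := ih u hlen hcu
      exact ⟨k + (if b then (1 : ℤ) else -1), by rw [hsu, hk, ← zpow_add]⟩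
    · -- contradiction: conjugation makes the word longer
      exfalso
      have hconj : s * FreeGroup.of i ^ n * s⁻¹ = FreeGroup.of i ^ n := by
        rw [← hc.eq]; group
      have := conj_word i j b L' s n hn hij hw
      rw [hconj, FreeGroup.toWord_of_pow] at this
      have hlen := congrArg List.length this
      simp [FreeGroup.invRev_length, hw] at hlen
      omega

private lemma comm_zpow {i : α} {s : FreeGroup α} {d : ℤ} (hd : d ≠ 0)
    (hc : Commute (FreeGroup.of i ^ d) s) : ∃ k : ℤ, s = FreeGroup.of i ^ k := by
  rcases lt_or_gt_of_ne hd with hneg | hpos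
  · have hc' : Commute (FreeGroup.of i ^ (-d).toNat) s := by
      have : (FreeGroup.of i : FreeGroup α) ^ ((-d).toNat : ℕ) = (FreeGroup.of i ^ d)⁻¹ := by
        rw [← zpow_natCast, Int.toNat_of_nonneg (by omega), ← zpow_neg]
      rw [this]
      exact hc.inv_left
    exact comm_pow_aux i (-d).toNat (by omega) s.toWord.length s le_rfl hc'
  · have hc' : Commute (FreeGroup.of i ^ d.toNat) s := by
      have : (FreeGroup.of i : FreeGroup α) ^ (d.toNat : ℕ) = FreeGroup.of i ^ d := by
        rw [← zpow_natCast, Int.toNat_of_nonneg (by omega)]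
      rw [this]
      exact hc
    exact comm_pow_aux i d.toNat (by omega) s.toWord.length s le_rfl hc'

private lemma ell2_orbit_zero {G : Type*} {f : G → ℂ}
    (hf : Summable fun s : G => ‖f s‖ ^ 2) (g : ℤ → G) (hg : Function.Injective g)
    (hc : ∀ n, ‖f (g n)‖ = ‖f (g 0)‖) : f (g 0) = 0 := by
  by_contra h
  have hc0 : 0 < ‖f (g 0)‖ ^ 2 := pow_pos (norm_pos_iff.mpr h) 2
  have hev : ∀ᶠ t in Filter.cofinite, ‖f t‖ ^ 2 < ‖f (g 0)‖ ^ 2 :=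
    hf.tendsto_cofinite_zero.eventually_lt_const hc0
  have hfin : {t | ¬ ‖f t‖ ^ 2 < ‖f (g 0)‖ ^ 2}.Finite := Filter.eventually_cofinite.mp hev
  refine Set.infinite_of_injective_forall_mem hg (fun n => ?_) hfin
  show ¬ ‖f (g n)‖ ^ 2 < ‖f (g 0)‖ ^ 2
  rw [hc n]
  exact lt_irrefl _

theorem stmt8 (f : FreeGroup (Fin 4) → ℂ)
    (hf : Summable fun s : FreeGroup (Fin 4) => ‖f s‖ ^ 2)
    (h1 : ∀ (s : FreeGroup (Fin 4)) (n : ℤ),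
      ‖f (FreeGroup.of 0 ^ n * s * FreeGroup.of 0 ^ (-n))‖ = ‖f s‖)
    (h2 : ∀ (s : FreeGroup (Fin 4)) (n : ℤ),
      ‖f (FreeGroup.of 1 ^ (2 * n) * s * FreeGroup.of 1 ^ (-(2 * n)))‖ = ‖f s‖)
    (s : FreeGroup (Fin 4)) (hs : s ≠ 1) : f s = 0 := by
  by_cases hA : ∃ d : ℤ, d ≠ 0 ∧ Commute (FreeGroup.of (0 : Fin 4) ^ d) s
  · -- s is a nonzero power of the first generator; use conjugation by of 1 ^ (2n)
    obtain ⟨d, hd, hcd⟩ := hA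
    obtain ⟨k, rfl⟩ := comm_zpow hd hcd
    have hk : k ≠ 0 := fun h => hs (by rw [h, zpow_zero])
    have hB : ∀ e : ℤ, Commute (FreeGroup.of (1 : Fin 4) ^ e) (FreeGroup.of (0 : Fin 4) ^ k) →
        e = 0 := by
      intro e he
      by_contra he0
      obtain ⟨l, hl⟩ := comm_zpow he0 he
      -- apply the exponent-sum homomorphism at the generator 0
      set φ : FreeGroup (Fin 4) →* Multiplicative ℤ :=
        FreeGroup.lift fun x : Fin 4 => Multiplicative.ofAdd (if x = 0 then (1 : ℤ) else 0) with hφ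
      have := congrArg φ hl
      rw [map_zpow, map_zpow, hφ] at this
      simp only [FreeGroup.lift_apply_of] at this
      norm_num at this
      have h2' := congrArg Multiplicative.toAdd this
      exact hk this
    set x : FreeGroup (Fin 4) := FreeGroup.of 1 with hx
    set t : FreeGroup (Fin 4) := FreeGroup.of 0 ^ k with ht
    set g : ℤ → FreeGroup (Fin 4) := fun n => x ^ (2 * n) * t * x ^ (-(2 * n)) with hg
    have hginj : Function.Injective g := by
      intro n m hnm
      simp only [hg] at hnm
      have key : x ^ (2 * n - 2 * m) * t * x ^ (-(2 * n - 2 * m)) = t := by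
        rw [show x ^ (2 * n - 2 * m) * t * x ^ (-(2 * n - 2 * m))
            = x ^ (-(2 * m)) * (x ^ (2 * n) * t * x ^ (-(2 * n))) * x ^ (2 * m) by group,
          hnm]
        group
      have hcomm : Commute (x ^ (2 * n - 2 * m)) t := by
        have := congrArg (· * x ^ (2 * n - 2 * m)) key
        rw [show x ^ (2 * n - 2 * m) * t * x ^ (-(2 * n - 2 * m)) * x ^ (2 * n - 2 * m)
            = x ^ (2 * n - 2 * m) * t by group] at this
        exact this
      have := hB _ hcomm
      omega
    have hnorm : ∀ n, ‖f (g n)‖ = ‖f (g 0)‖ := by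
      intro n
      have h0 : g 0 = t := by simp [hg]
      rw [h0]
      exact h2 t n
    have := ell2_orbit_zero hf g hginj hnorm
    rw [show g 0 = t by simp [hg]] at this
    exact this
  · -- conjugation by of 0 ^ n gives infinitely many elements
    push_neg at hA
    set x : FreeGroup (Fin 4) := FreeGroup.of 0 with hx
    set g : ℤ → FreeGroup (Fin 4) := fun n => x ^ n * s * x ^ (-n) with hg
    have hginj : Function.Injective g := by
      intro n m hnm
      simp only [hg] at hnm
      have key : x ^ (n - m) * s * x ^ (-(n - m)) = s := by
        rw [show x ^ (n - m) * s * x ^ (-(n - m))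
            = x ^ (-m) * (x ^ n * s * x ^ (-n)) * x ^ m by group, hnm]
        group
      have hcomm : Commute (x ^ (n - m)) s := by
        have := congrArg (· * x ^ (n - m)) key
        rw [show x ^ (n - m) * s * x ^ (-(n - m)) * x ^ (n - m)
            = x ^ (n - m) * s by group] at this
        exact this
      by_contra hne
      exact hA (n - m) (by omega) hcomm
    have hnorm : ∀ n, ‖f (g n)‖ = ‖f (g 0)‖ := by
      intro n
      have h0 : g 0 = s := by simp [hg]
      rw [h0]
      exact h1 s n
    have := ell2_orbit_zero hf g hginj hnorm
    rw [show g 0 = s by simp [hg]] at this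
    exact this
end
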